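/- Let (X,T) be a topological dynamical system and μ an ergodic T-invariant Borel probability measure on X. Then (X,T) is μ-mean equicontinuous if and only if it is μ-logarithmically mean equicontinuous. -/

import Mathlib

open Filter MeasureTheory Topology

/-- The `n`-th harmonic number `H_n = ∑_{k=1}^n 1/k` as a real number. -/
noncomputable def H (n : ℕ) : ℝ := ∑ k ∈ Finset.range n, (1 : ℝ) / (k + 1)

/-- A Borel probability measure `μ` is `T`-invariant if `μ(T⁻¹B) = μ(B)` for every Borel set. -/
def IsInvariantMeasure {X : Type*} [MetricSpace X] [MeasurableSpace X]
    (T : X → X) (μ : ProbabilityMeasure X) : Prop :=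
  ∀ B : Set X, MeasurableSet B → μ (T ⁻¹' B) = μ B

/-- A `T`-invariant Borel probability measure `μ` is ergodic if every Borel set `B` with
`T⁻¹B = B` satisfies `μ(B) ∈ {0,1}`. -/
def IsErgodicMeasure {X : Type*} [MetricSpace X] [MeasurableSpace X]
    (T : X → X) (μ : ProbabilityMeasure X) : Prop :=
  IsInvariantMeasure T μ ∧
    ∀ B : Set X, MeasurableSet B → T ⁻¹' B = B → μ B = 0 ∨ μ B = 1

/-- `(X,T)` is `μ`-mean equicontinuous if for every `η ∈ (0,1)` there is a Borel set `X_η`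
with `μ(X_η) > η` such that for every `ε > 0` there is `δ > 0` such that `x, y ∈ X_η` with
`d(x,y) < δ` satisfy `limsup_n (1/n) ∑_{k=1}^n d(T^{k-1}x, T^{k-1}y) < ε`. -/
def MuMeanEquicontinuous {X : Type*} [MetricSpace X] [MeasurableSpace X]
    (T : X → X) (μ : ProbabilityMeasure X) : Prop :=
  ∀ η : NNReal, 0 < η → η < 1 →
    ∃ Xη : Set X, MeasurableSet Xη ∧ η < μ Xη ∧
      ∀ ε > (0 : ℝ), ∃ δ > (0 : ℝ), ∀ x ∈ Xη, ∀ y ∈ Xη, dist x y < δ →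
        limsup (fun n : ℕ =>
          (1 / (n : ℝ)) * ∑ k ∈ Finset.range n, dist (T^[k] x) (T^[k] y)) atTop < ε

/-- `(X,T)` is `μ`-logarithmically mean equicontinuous if for every `η ∈ (0,1)` there is a
Borel set `X_η` with `μ(X_η) > η` such that for every `ε > 0` there is `δ > 0` such that
`x, y ∈ X_η` with `d(x,y) < δ` satisfy
`limsup_n (1/H_n) ∑_{k=1}^n (1/k) d(T^{k-1}x, T^{k-1}y) < ε`. -/
def MuLogMeanEquicontinuous {X : Type*} [MetricSpace X] [MeasurableSpace X]
    (T : X → X) (μ : ProbabilityMeasure X) : Prop :=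
  ∀ η : NNReal, 0 < η → η < 1 →
    ∃ Xη : Set X, MeasurableSet Xη ∧ η < μ Xη ∧
      ∀ ε > (0 : ℝ), ∃ δ > (0 : ℝ), ∀ x ∈ Xη, ∀ y ∈ Xη, dist x y < δ →
        limsup (fun n : ℕ =>
          (1 / H n) * ∑ k ∈ Finset.range n, (1 / (k + 1 : ℝ)) * dist (T^[k] x) (T^[k] y))
          atTop < ε

set_option linter.unusedSectionVars false
set_option maxHeartbeats 1000000

namespace MLME

lemma H_tendsto_atTop : Tendsto H atTop atTop := by
  have := Real.tendsto_sum_range_one_div_nat_succ_atTop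
  unfold H
  convert this using 2

lemma H_nonneg (n : ℕ) : 0 ≤ H n :=
  Finset.sum_nonneg fun k _ => by positivity

/-- Cesàro average of a sequence. -/
noncomputable def ces (a : ℕ → ℝ) (n : ℕ) : ℝ := (1 / (n : ℝ)) * ∑ k ∈ Finset.range n, a k

lemma abel (a : ℕ → ℝ) (n : ℕ) :
    ∑ k ∈ Finset.range n, (1 / (k + 1 : ℝ)) * a k
      = ces a n + ∑ j ∈ Finset.range n, (1 / (j + 1 : ℝ)) * ces a j := by
  induction n with
  | zero => simp [ces]
  | succ n ih =>
      rw [Finset.sum_range_succ, ih, Finset.sum_range_succ]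
      have hsum : ∑ k ∈ Finset.range (n+1), a k = (∑ k ∈ Finset.range n, a k) + a n :=
        Finset.sum_range_succ a n
      rcases Nat.eq_zero_or_pos n with rfl | hn
      · simp [ces]
      · have hn0 : (n : ℝ) ≠ 0 := Nat.cast_ne_zero.2 hn.ne'
        have hn1 : (n : ℝ) + 1 ≠ 0 := by positivity
        simp only [ces, hsum, Nat.cast_succ]
        field_simp
        ring

lemma weighted_avg {b : ℕ → ℝ} {c : ℝ} (hb : Tendsto b atTop (𝓝 c)) :
    Tendsto (fun n => (1 / H n) * ∑ j ∈ Finset.range n, (1 / (j + 1 : ℝ)) * b j)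
      atTop (𝓝 c) := by
  rw [Metric.tendsto_nhds]
  intro ε hε
  obtain ⟨N₁, hN₁⟩ := (Metric.tendsto_atTop.1 hb) (ε/4) (by positivity)
  set C : ℝ := ∑ j ∈ Finset.range N₁, |b j - c| with hC
  have hC0 : 0 ≤ C := Finset.sum_nonneg fun j _ => abs_nonneg _
  have hHn : ∀ᶠ n in atTop, max 1 (C / (ε/4)) ≤ H n := H_tendsto_atTop.eventually_ge_atTop _
  filter_upwards [hHn, eventually_ge_atTop N₁] with n hn hnN
  have hH1 : (1:ℝ) ≤ H n := le_trans (le_max_left _ _) hn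
  have hHpos : 0 < H n := lt_of_lt_of_le one_pos hH1
  have key : |∑ j ∈ Finset.range n, (1 / (j + 1 : ℝ)) * b j - c * H n| ≤ C + (ε/4) * H n := by
    have h1 : ∑ j ∈ Finset.range n, (1 / (j + 1 : ℝ)) * b j - c * H n
        = ∑ j ∈ Finset.range n, (1 / (j + 1 : ℝ)) * (b j - c) := by
      rw [H, Finset.mul_sum, ← Finset.sum_sub_distrib]
      exact Finset.sum_congr rfl fun j _ => by ring
    rw [h1, ← Finset.sum_range_add_sum_Ico _ hnN]
    refine (abs_add_le _ _).trans (add_le_add ?_ ?_)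
    · refine (Finset.abs_sum_le_sum_abs _ _).trans ?_
      refine Finset.sum_le_sum fun j _ => ?_
      rw [abs_mul]
      have hw : |(1 / (j + 1 : ℝ))| ≤ 1 := by
        rw [abs_of_nonneg (by positivity)]
        rw [div_le_one (by positivity)]; linarith [Nat.cast_nonneg (α := ℝ) j]
      calc |(1 / (j + 1 : ℝ))| * |b j - c| ≤ 1 * |b j - c| :=
            mul_le_mul_of_nonneg_right hw (abs_nonneg _)
        _ = |b j - c| := one_mul _
    · refine (Finset.abs_sum_le_sum_abs _ _).trans ?_
      have : ∀ j ∈ Finset.Ico N₁ n, |(1 / (j + 1 : ℝ)) * (b j - c)| ≤ (ε/4) * (1 / (j + 1 : ℝ)) := by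
        intro j hj
        rw [abs_mul, abs_of_nonneg (by positivity : (0:ℝ) ≤ 1 / (j+1)), mul_comm]
        refine mul_le_mul_of_nonneg_right ?_ (by positivity)
        have := hN₁ j (Finset.mem_Ico.1 hj).1
        rw [Real.dist_eq] at this
        linarith
      refine (Finset.sum_le_sum this).trans ?_
      rw [← Finset.mul_sum]
      refine mul_le_mul_of_nonneg_left ?_ (by positivity)
      calc ∑ j ∈ Finset.Ico N₁ n, (1 / (j + 1 : ℝ))
          ≤ ∑ j ∈ Finset.range n, (1 / (j + 1 : ℝ)) := by
            refine Finset.sum_le_sum_of_subset_of_nonneg ?_ (fun j _ _ => by positivity)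
            intro j hj
            exact Finset.mem_range.2 (Finset.mem_Ico.1 hj).2
        _ = H n := rfl
  have hCsmall : C / H n ≤ ε/4 := by
    rw [div_le_iff₀ hHpos]
    have h2 : C / (ε/4) ≤ H n := le_trans (le_max_right _ _) hn
    rw [div_le_iff₀ (by positivity : (0:ℝ) < ε/4)] at h2
    linarith [h2]
  have heq : (1 / H n) * (∑ j ∈ Finset.range n, (1 / (j + 1 : ℝ)) * b j) - c
      = (∑ j ∈ Finset.range n, (1 / (j + 1 : ℝ)) * b j - c * H n) / H n := by
    field_simp
  rw [Real.dist_eq, heq, abs_div, abs_of_pos hHpos, div_lt_iff₀ hHpos]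
  calc |∑ j ∈ Finset.range n, (1 / (j + 1 : ℝ)) * b j - c * H n|
      ≤ C + (ε/4) * H n := key
    _ = (C / H n) * H n + (ε/4) * H n := by field_simp
    _ ≤ (ε/4) * H n + (ε/4) * H n := by
        have := mul_le_mul_of_nonneg_right hCsmall hHpos.le
        linarith
    _ < ε * H n := by nlinarith
lemma hardy {a : ℕ → ℝ} {c : ℝ}
    (hc : Tendsto (ces a) atTop (𝓝 c)) :
    Tendsto (fun n => (1 / H n) * ∑ k ∈ Finset.range n, (1 / (k + 1 : ℝ)) * a k)
      atTop (𝓝 c) := by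
  have h1 : (fun n => (1 / H n) * ∑ k ∈ Finset.range n, (1 / (k + 1 : ℝ)) * a k)
      = fun n => (1 / H n) * ces a n + (1 / H n) * ∑ j ∈ Finset.range n, (1 / (j + 1 : ℝ)) * ces a j := by
    funext n; rw [abel]; ring
  rw [h1]
  have h2 : Tendsto (fun n => (1 / H n) * ces a n) atTop (𝓝 0) := by
    have hinv : Tendsto (fun n => 1 / H n) atTop (𝓝 0) := by
      simpa [one_div, Pi.inv_def] using H_tendsto_atTop.inv_tendsto_atTop
    simpa using hinv.mul hc
  simpa using h2.add (weighted_avg hc)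

end MLME


namespace MLME

lemma bddU {u : ℕ → ℝ} {M : ℝ} (h : ∀ n, u n ≤ M) :
    IsBoundedUnder (· ≤ ·) atTop u := isBoundedUnder_of ⟨M, h⟩

lemma bddL {u : ℕ → ℝ} {m : ℝ} (h : ∀ n, m ≤ u n) :
    IsBoundedUnder (· ≥ ·) atTop u := isBoundedUnder_of ⟨m, h⟩

lemma cobddU {u : ℕ → ℝ} {m : ℝ} (h : ∀ n, m ≤ u n) :
    IsCoboundedUnder (· ≤ ·) atTop u := (bddL h).isCoboundedUnder_le

lemma cobddL {u : ℕ → ℝ} {M : ℝ} (h : ∀ n, u n ≤ M) :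
    IsCoboundedUnder (· ≥ ·) atTop u := (bddU h).isCoboundedUnder_ge

lemma limsup_triangle {u v w : ℕ → ℝ} {Mv Mw : ℝ}
    (h0u : ∀ n, 0 ≤ u n) (hv : ∀ n, v n ≤ Mv) (hw : ∀ n, w n ≤ Mw)
    (h : ∀ n, u n ≤ v n + w n) :
    limsup u atTop ≤ limsup v atTop + limsup w atTop := by
  refine le_of_forall_pos_le_add fun ε hε => ?_
  have hv' : ∀ᶠ n in atTop, v n < limsup v atTop + ε/2 :=
    eventually_lt_of_limsup_lt (lt_add_of_pos_right _ (by positivity)) (bddU hv)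
  have hw' : ∀ᶠ n in atTop, w n < limsup w atTop + ε/2 :=
    eventually_lt_of_limsup_lt (lt_add_of_pos_right _ (by positivity)) (bddU hw)
  refine limsup_le_of_le (cobddU h0u) ?_
  filter_upwards [hv', hw'] with n h1 h2
  have := h n; linarith

lemma limsup_le_of_tendsto_sub {u v : ℕ → ℝ} {Mv : ℝ} {mu : ℝ}
    (h0u : ∀ n, mu ≤ u n) (hv : ∀ n, v n ≤ Mv)
    (h : Tendsto (fun n => u n - v n) atTop (𝓝 0)) :
    limsup u atTop ≤ limsup v atTop := by
  refine le_of_forall_pos_le_add fun ε hε => ?_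
  have hv' : ∀ᶠ n in atTop, v n < limsup v atTop + ε/2 :=
    eventually_lt_of_limsup_lt (lt_add_of_pos_right _ (by positivity)) (bddU hv)
  have hd : ∀ᶠ n in atTop, |u n - v n| < ε/2 := by
    have := (Metric.tendsto_nhds.1 h) (ε/2) (by positivity)
    simpa [Real.dist_eq] using this
  refine limsup_le_of_le (cobddU h0u) ?_
  filter_upwards [hv', hd] with n h1 h2
  have := abs_lt.1 h2
  linarith

lemma limsup_eq_of_tendsto_sub {u v : ℕ → ℝ} {M m : ℝ}
    (h0u : ∀ n, m ≤ u n) (hu : ∀ n, u n ≤ M) (h0v : ∀ n, m ≤ v n) (hv : ∀ n, v n ≤ M)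
    (h : Tendsto (fun n => u n - v n) atTop (𝓝 0)) :
    limsup u atTop = limsup v atTop := by
  refine le_antisymm (limsup_le_of_tendsto_sub h0u hv h) (limsup_le_of_tendsto_sub h0v hu ?_)
  have : (fun n => v n - u n) = fun n => -(u n - v n) := by funext n; ring
  rw [this]
  simpa using h.neg

lemma liminf_ge_of_tendsto_sub {u v : ℕ → ℝ} {Mu mv : ℝ}
    (hu : ∀ n, u n ≤ Mu) (h0v : ∀ n, mv ≤ v n)
    (h : Tendsto (fun n => u n - v n) atTop (𝓝 0)) :
    liminf v atTop ≤ liminf u atTop := by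
  have key : ∀ ε > (0:ℝ), liminf v atTop - ε ≤ liminf u atTop := by
    intro ε hε
    have hv' : ∀ᶠ n in atTop, liminf v atTop - ε/2 < v n := by
      refine eventually_lt_of_lt_liminf ?_ (bddL h0v)
      linarith
    have hd : ∀ᶠ n in atTop, |u n - v n| < ε/2 := by
      have := (Metric.tendsto_nhds.1 h) (ε/2) (by positivity)
      simpa [Real.dist_eq] using this
    refine le_liminf_of_le (cobddL hu) ?_
    filter_upwards [hv', hd] with n h1 h2
    have := abs_lt.1 h2
    linarith
  by_contra hcon
  push_neg at hcon
  have := key ((liminf v atTop - liminf u atTop)/2) (by linarith)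
  linarith

lemma liminf_eq_of_tendsto_sub {u v : ℕ → ℝ} {M m : ℝ}
    (h0u : ∀ n, m ≤ u n) (hu : ∀ n, u n ≤ M) (h0v : ∀ n, m ≤ v n) (hv : ∀ n, v n ≤ M)
    (h : Tendsto (fun n => u n - v n) atTop (𝓝 0)) :
    liminf u atTop = liminf v atTop := by
  refine le_antisymm ?_ (liminf_ge_of_tendsto_sub hu h0v h)
  refine liminf_ge_of_tendsto_sub hv h0u ?_
  have : (fun n => v n - u n) = fun n => -(u n - v n) := by funext n; ring
  rw [this]
  simpa using h.neg

end MLME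


namespace MLME

variable {Ω : Type*} [MeasurableSpace Ω]

/-- Birkhoff sums. -/
noncomputable def bs (S : Ω → Ω) (f : Ω → ℝ) (n : ℕ) (p : Ω) : ℝ :=
  ∑ k ∈ Finset.range n, f (S^[k] p)

lemma bs_succ' (S : Ω → Ω) (f : Ω → ℝ) (n : ℕ) (p : Ω) :
    bs S f (n + 1) p = f p + bs S f n (S p) := by
  unfold bs
  rw [Finset.sum_range_succ']
  simp only [Function.iterate_succ_apply, Function.iterate_zero_apply]
  ring

lemma bs_succ (S : Ω → Ω) (f : Ω → ℝ) (n : ℕ) (p : Ω) :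
    bs S f (n + 1) p = bs S f n p + f (S^[n] p) := Finset.sum_range_succ _ _

lemma bs_measurable {S : Ω → Ω} {f : Ω → ℝ} (hS : Measurable S) (hf : Measurable f) (n : ℕ) :
    Measurable (bs S f n) :=
  Finset.measurable_sum _ fun k _ => hf.comp (hS.iterate k)

lemma bs_abs_le {S : Ω → Ω} {f : Ω → ℝ} {M : ℝ} (hfb : ∀ p, |f p| ≤ M) (n : ℕ) (p : Ω) :
    |bs S f n p| ≤ n * M := by
  calc |bs S f n p| ≤ ∑ k ∈ Finset.range n, |f (S^[k] p)| := Finset.abs_sum_le_sum_abs _ _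
    _ ≤ ∑ _k ∈ Finset.range n, M := Finset.sum_le_sum fun k _ => hfb _
    _ = n * M := by simp [mul_comm]

/-- Running maxima of Birkhoff sums: `mx S f N p = max (0, max_{1 ≤ k ≤ N} bs S f k p)`. -/
noncomputable def mx (S : Ω → Ω) (f : Ω → ℝ) : ℕ → Ω → ℝ
  | 0 => fun _ => 0
  | (N + 1) => fun p => max (mx S f N p) (bs S f (N + 1) p)

lemma mx_measurable {S : Ω → Ω} {f : Ω → ℝ} (hS : Measurable S) (hf : Measurable f) (N : ℕ) :
    Measurable (mx S f N) := by
  induction N with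
  | zero => exact measurable_const
  | succ N ih => exact ih.max (bs_measurable hS hf (N + 1))

lemma mx_nonneg (S : Ω → Ω) (f : Ω → ℝ) (N : ℕ) (p : Ω) : 0 ≤ mx S f N p := by
  induction N with
  | zero => simp [mx]
  | succ N ih => exact le_trans ih (le_max_left _ _)

lemma mx_mono (S : Ω → Ω) (f : Ω → ℝ) (N : ℕ) (p : Ω) : mx S f N p ≤ mx S f (N + 1) p :=
  le_max_left _ _

lemma bs_le_mx (S : Ω → Ω) (f : Ω → ℝ) {k N : ℕ} (hk1 : 1 ≤ k) (hkN : k ≤ N) (p : Ω) :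
    bs S f k p ≤ mx S f N p := by
  induction N with
  | zero => omega
  | succ N ih =>
      rcases Nat.lt_or_ge k (N + 1) with h | h
      · exact le_trans (ih (by omega)) (le_max_left _ _)
      · have : k = N + 1 := by omega
        subst this
        exact le_max_right _ _

lemma mx_abs_le {S : Ω → Ω} {f : Ω → ℝ} {M : ℝ} (hfb : ∀ p, |f p| ≤ M) (N : ℕ) (p : Ω) :
    |mx S f N p| ≤ N * M + 1 := by
  have hM : 0 ≤ M := le_trans (abs_nonneg _) (hfb p)
  rw [abs_of_nonneg (mx_nonneg S f N p)]
  induction N with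
  | zero => norm_num [mx]
  | succ N ih =>
      show max (mx S f N p) (bs S f (N + 1) p) ≤ _
      refine max_le (le_trans ih ?_) ?_
      · push_cast; nlinarith
      · have := (abs_le.1 (bs_abs_le (S:=S) hfb (N + 1) p)).2
        push_cast at this ⊢; linarith

lemma mx_pos_iff (S : Ω → Ω) (f : Ω → ℝ) (N : ℕ) (p : Ω) :
    0 < mx S f N p ↔ ∃ k, 1 ≤ k ∧ k ≤ N ∧ 0 < bs S f k p := by
  constructor
  · intro h
    induction N with
    | zero => simp [mx] at h
    | succ N ih =>
        have h' : 0 < max (mx S f N p) (bs S f (N + 1) p) := h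
        rcases max_cases (mx S f N p) (bs S f (N + 1) p) with ⟨heq, _⟩ | ⟨heq, _⟩
        · obtain ⟨k, hk⟩ := ih (heq ▸ h')
          exact ⟨k, hk.1, by omega, hk.2.2⟩
        · exact ⟨N + 1, by omega, le_refl _, heq ▸ h'⟩
  · rintro ⟨k, hk1, hkN, hpos⟩
    exact lt_of_lt_of_le hpos (bs_le_mx S f hk1 hkN p)

lemma mx_rec_le (S : Ω → Ω) (f : Ω → ℝ) (N : ℕ) (p : Ω) :
    mx S f (N + 1) p ≤ max 0 (f p + mx S f N (S p)) := by
  induction N with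
  | zero =>
      show max (mx S f 0 p) (bs S f 1 p) ≤ _
      refine max_le (by simp [mx]) ?_
      rw [bs_succ' S f 0 p]
      have : bs S f 0 (S p) = 0 := by simp [bs]
      rw [this]
      exact le_trans (by simp [mx]) (le_max_right 0 (f p + mx S f 0 (S p)))
  | succ N ih =>
      show max (mx S f (N + 1) p) (bs S f (N + 2) p) ≤ _
      refine max_le (le_trans ih ?_) ?_
      · exact max_le_max (le_refl 0) (by linarith [mx_mono S f N (S p)])
      · rw [bs_succ' S f (N + 1) p]
        exact le_trans (add_le_add (le_refl (f p))
          (bs_le_mx S f (by omega) (le_refl (N + 1)) (S p))) (le_max_right 0 _)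

lemma integrable_of_bounded {ν : Measure Ω} [IsFiniteMeasure ν] {f : Ω → ℝ} {M : ℝ}
    (hf : Measurable f) (hfb : ∀ p, |f p| ≤ M) : Integrable f ν :=
  Integrable.mono' (integrable_const M) hf.aestronglyMeasurable
    (ae_of_all _ fun p => by simpa [Real.norm_eq_abs] using hfb p)

/-- **Maximal ergodic lemma** (Garsia's argument). -/
theorem maximal_ergodic (ν : Measure Ω) [IsFiniteMeasure ν] {S : Ω → Ω}
    (hS : MeasurePreserving S ν ν) {f : Ω → ℝ} (hf : Measurable f) {M : ℝ}
    (hfb : ∀ p, |f p| ≤ M) :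
    0 ≤ ∫ p in {p | ∃ k, 1 ≤ k ∧ 0 < bs S f k p}, f p ∂ν := by
  have hfi : Integrable f ν := integrable_of_bounded hf hfb
  have hmxi : ∀ N, Integrable (mx S f N) ν :=
    fun N => integrable_of_bounded (mx_measurable hS.measurable hf N) (mx_abs_le hfb N)
  set E : ℕ → Set Ω := fun N => {p | 0 < mx S f (N + 1) p} with hE
  have hEmeas : ∀ N, MeasurableSet (E N) :=
    fun N => measurableSet_lt measurable_const (mx_measurable hS.measurable hf (N + 1))
  have hmono : Monotone E := by
    refine monotone_nat_of_le_succ fun N p hp => ?_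
    exact lt_of_lt_of_le hp (mx_mono S f (N + 1) p)
  have hcomp : ∀ N, Integrable (fun p => mx S f N (S p)) ν := by
    intro N
    exact integrable_of_bounded ((mx_measurable hS.measurable hf N).comp hS.measurable)
      (fun p => mx_abs_le hfb N (S p))
  have hint_comp_eq : ∀ N, ∫ p, mx S f N (S p) ∂ν = ∫ p, mx S f N p ∂ν := by
    intro N
    conv_rhs => rw [← hS.map_eq]
    rw [integral_map hS.measurable.aemeasurable
      ((mx_measurable hS.measurable hf N).aestronglyMeasurable)]
  have step : ∀ N, 0 ≤ ∫ p in E N, f p ∂ν := by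
    intro N
    have hineq : ∀ p ∈ E N, mx S f N p - mx S f N (S p) ≤ f p := by
      intro p hp
      have h1 : 0 < mx S f (N + 1) p := hp
      have h2 := mx_rec_le S f N p
      have h3 : mx S f (N + 1) p ≤ f p + mx S f N (S p) := by
        rcases le_or_gt (f p + mx S f N (S p)) 0 with hc | hc
        · exfalso
          rw [max_eq_left hc] at h2
          linarith
        · rwa [max_eq_right hc.le] at h2
      linarith [mx_mono S f N p]
    have hint2 : Integrable (fun p => mx S f N p - mx S f N (S p)) ν :=
      (hmxi N).sub (hcomp N)
    have h4 : ∫ p in E N, (mx S f N p - mx S f N (S p)) ∂ν ≤ ∫ p in E N, f p ∂ν := by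
      refine setIntegral_mono_on ?_ ?_ (hEmeas N) hineq
      · exact hint2.integrableOn
      · exact hfi.integrableOn
    refine le_trans ?_ h4
    have h5 : ∫ p in E N, (mx S f N p - mx S f N (S p)) ∂ν
        = (∫ p, (mx S f N p - mx S f N (S p)) ∂ν)
          - ∫ p in (E N)ᶜ, (mx S f N p - mx S f N (S p)) ∂ν := by
      rw [← integral_add_compl (hEmeas N) hint2]
      ring
    have h6 : ∫ p, (mx S f N p - mx S f N (S p)) ∂ν = 0 := by
      rw [integral_sub (hmxi N) (hcomp N), hint_comp_eq N, sub_self]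
    have h7 : ∫ p in (E N)ᶜ, (mx S f N p - mx S f N (S p)) ∂ν ≤ 0 := by
      refine setIntegral_nonpos (hEmeas N).compl fun p hp => ?_
      have h8 : ¬ 0 < mx S f (N + 1) p := hp
      have h9 : mx S f (N + 1) p = 0 := le_antisymm (not_lt.1 h8) (mx_nonneg S f (N + 1) p)
      have h10 : mx S f N p = 0 :=
        le_antisymm (le_trans (mx_mono S f N p) h9.le) (mx_nonneg S f N p)
      rw [h10]
      simp [mx_nonneg]
    rw [h5, h6]
    linarith
  have hunion : ⋃ N, E N = {p | ∃ k, 1 ≤ k ∧ 0 < bs S f k p} := by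
    ext p
    simp only [Set.mem_iUnion, hE, Set.mem_setOf_eq]
    constructor
    · rintro ⟨N, hN⟩
      obtain ⟨k, hk1, _, hkpos⟩ := (mx_pos_iff S f (N + 1) p).1 hN
      exact ⟨k, hk1, hkpos⟩
    · rintro ⟨k, hk1, hkpos⟩
      exact ⟨k, (mx_pos_iff S f (k + 1) p).2 ⟨k, hk1, by omega, hkpos⟩⟩
  have htend := tendsto_setIntegral_of_monotone hEmeas hmono
    (hfi.integrableOn : IntegrableOn f (⋃ N, E N) ν)
  rw [hunion] at htend
  exact ge_of_tendsto' htend step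

end MLME

namespace MLME

variable {Ω : Type*} [MeasurableSpace Ω]

/-- Birkhoff averages. -/
noncomputable def av (S : Ω → Ω) (f : Ω → ℝ) (n : ℕ) (p : Ω) : ℝ := (1 / (n : ℝ)) * bs S f n p

lemma av_abs_le {S : Ω → Ω} {f : Ω → ℝ} {M : ℝ} (hfb : ∀ p, |f p| ≤ M) (n : ℕ) (p : Ω) :
    |av S f n p| ≤ M := by
  have hM : 0 ≤ M := le_trans (abs_nonneg _) (hfb p)
  rcases Nat.eq_zero_or_pos n with rfl | hn
  · simp [av, bs, hM]
  · have hn0 : (0:ℝ) < n := by exact_mod_cast hn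
    rw [av, abs_mul, abs_of_nonneg (by positivity : (0:ℝ) ≤ 1 / (n:ℝ))]
    calc (1 / (n:ℝ)) * |bs S f n p| ≤ (1 / (n:ℝ)) * (n * M) :=
          mul_le_mul_of_nonneg_left (bs_abs_le (S := S) hfb n p) (by positivity)
      _ = M := by field_simp

lemma av_measurable {S : Ω → Ω} {f : Ω → ℝ} (hS : Measurable S) (hf : Measurable f) (n : ℕ) :
    Measurable (av S f n) := (bs_measurable hS hf n).const_mul _

lemma av_shift_sub_tendsto {S : Ω → Ω} {f : Ω → ℝ} {M : ℝ} (hfb : ∀ p, |f p| ≤ M) (p : Ω) :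
    Tendsto (fun n => av S f n (S p) - av S f n p) atTop (𝓝 0) := by
  have hb : ∀ n : ℕ, ‖av S f n (S p) - av S f n p‖ ≤ (2 * M) / n := by
    intro n
    rcases Nat.eq_zero_or_pos n with rfl | hn
    · simp [av, bs]
    · have hn0 : (0:ℝ) < n := by exact_mod_cast hn
      have h1 : bs S f n (S p) = bs S f (n + 1) p - f p := by
        rw [bs_succ' S f n p]; ring
      have h2 : bs S f (n + 1) p = bs S f n p + f (S^[n] p) := bs_succ S f n p
      have h3 : av S f n (S p) - av S f n p = (1 / (n:ℝ)) * (f (S^[n] p) - f p) := by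
        rw [av, av, h1, h2]; ring
      rw [Real.norm_eq_abs, h3, abs_mul, abs_of_nonneg (by positivity : (0:ℝ) ≤ 1 / (n:ℝ))]
      have habs : |f (S^[n] p) - f p| ≤ 2 * M := by
        calc |f (S^[n] p) - f p| ≤ |f (S^[n] p)| + |f p| := abs_sub _ _
          _ ≤ M + M := add_le_add (hfb _) (hfb _)
          _ = 2 * M := by ring
      have : 1 / (n:ℝ) * |f (S^[n] p) - f p| ≤ 1 / (n:ℝ) * (2 * M) :=
        mul_le_mul_of_nonneg_left habs (by positivity)
      calc 1 / (n:ℝ) * |f (S^[n] p) - f p| ≤ 1 / (n:ℝ) * (2 * M) := this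
        _ = 2 * M / n := by ring
  exact squeeze_zero_norm hb (tendsto_const_div_atTop_nhds_zero_nat (2 * M))

/-- Pointwise limsup of Birkhoff averages. -/
noncomputable def lsp (S : Ω → Ω) (f : Ω → ℝ) (p : Ω) : ℝ :=
  limsup (fun n => av S f n p) atTop

/-- Pointwise liminf of Birkhoff averages. -/
noncomputable def lip (S : Ω → Ω) (f : Ω → ℝ) (p : Ω) : ℝ :=
  liminf (fun n => av S f n p) atTop

lemma lsp_shift {S : Ω → Ω} {f : Ω → ℝ} {M : ℝ} (hfb : ∀ p, |f p| ≤ M) (p : Ω) :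
    lsp S f (S p) = lsp S f p :=
  limsup_eq_of_tendsto_sub (m := -M) (M := M)
    (fun n => (abs_le.1 (av_abs_le hfb n (S p))).1) (fun n => (abs_le.1 (av_abs_le hfb n (S p))).2)
    (fun n => (abs_le.1 (av_abs_le hfb n p)).1) (fun n => (abs_le.1 (av_abs_le hfb n p)).2)
    (av_shift_sub_tendsto hfb p)

lemma lip_shift {S : Ω → Ω} {f : Ω → ℝ} {M : ℝ} (hfb : ∀ p, |f p| ≤ M) (p : Ω) :
    lip S f (S p) = lip S f p :=
  liminf_eq_of_tendsto_sub (m := -M) (M := M)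
    (fun n => (abs_le.1 (av_abs_le hfb n (S p))).1) (fun n => (abs_le.1 (av_abs_le hfb n (S p))).2)
    (fun n => (abs_le.1 (av_abs_le hfb n p)).1) (fun n => (abs_le.1 (av_abs_le hfb n p)).2)
    (av_shift_sub_tendsto hfb p)

/-- **Pointwise (Birkhoff) ergodic theorem** for bounded measurable functions:
almost everywhere, the Birkhoff averages converge. -/
theorem birkhoff_ae_tendsto (ν : Measure Ω) [IsFiniteMeasure ν] {S : Ω → Ω}
    (hS : MeasurePreserving S ν ν) {f : Ω → ℝ} (hf : Measurable f) {M : ℝ}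
    (hfb : ∀ p, |f p| ≤ M) :
    ∀ᵐ p ∂ν, ∃ c, Tendsto (fun n => av S f n p) atTop (𝓝 c) := by
  have hav_meas : ∀ n, Measurable (av S f n) := av_measurable hS.measurable hf
  have hlsp_meas : Measurable (lsp S f) := Measurable.limsup hav_meas
  have hlip_meas : Measurable (lip S f) := Measurable.liminf hav_meas
  have havL : ∀ p n, -M ≤ av S f n p := fun p n => (abs_le.1 (av_abs_le hfb n p)).1
  have havU : ∀ p n, av S f n p ≤ M := fun p n => (abs_le.1 (av_abs_le hfb n p)).2
  have key : ∀ α β : ℝ, α < β → ν {p | lip S f p < α ∧ β < lsp S f p} = 0 := by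
    intro α β hab
    set A := {p | lip S f p < α ∧ β < lsp S f p} with hA
    have hAmeas : MeasurableSet A :=
      (measurableSet_lt hlip_meas measurable_const).inter
        (measurableSet_lt measurable_const hlsp_meas)
    have hmem : ∀ p, S p ∈ A ↔ p ∈ A := by
      intro p
      simp only [hA, Set.mem_setOf_eq, lip_shift hfb p, lsp_shift hfb p]
    -- first inequality : β * ν(A) ≤ ∫_A f
    have h1 : β * (ν A).toReal ≤ ∫ p in A, f p ∂ν := by
      set g : Ω → ℝ := A.indicator (fun p => f p - β) with hg
      have hgmeas : Measurable g := (hf.sub measurable_const).indicator hAmeas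
      have hgb : ∀ p, |g p| ≤ M + |β| := by
        intro p
        by_cases hp : p ∈ A
        · rw [hg, Set.indicator_of_mem hp]
          calc |f p - β| ≤ |f p| + |β| := abs_sub _ _
            _ ≤ M + |β| := add_le_add (hfb p) le_rfl
        · rw [hg, Set.indicator_of_notMem hp]
          have : (0:ℝ) ≤ M := le_trans (abs_nonneg _) (hfb p)
          simp only [abs_zero]
          positivity
      have hbsg : ∀ k p, bs S g k p = if p ∈ A then bs S f k p - k * β else 0 := by
        intro k
        induction k with
        | zero => intro p; simp [bs]
        | succ k ih =>
            intro p
            rw [bs_succ' S g k p, bs_succ' S f k p, ih (S p)]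
            by_cases hp : p ∈ A
            · have hp' : S p ∈ A := (hmem p).2 hp
              simp only [hg, Set.indicator_of_mem hp, if_pos hp, if_pos hp']
              push_cast; ring
            · have hp' : S p ∉ A := fun h => hp ((hmem p).1 h)
              simp [hg, Set.indicator_of_notMem hp, if_neg hp, if_neg hp']
      have hEeq : {p | ∃ k, 1 ≤ k ∧ 0 < bs S g k p} = A := by
        ext p
        simp only [Set.mem_setOf_eq]
        constructor
        · rintro ⟨k, _, hkpos⟩
          by_contra hp
          rw [hbsg k p, if_neg hp] at hkpos
          exact lt_irrefl 0 hkpos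
        · intro hp
          have hfreq : ∃ᶠ n in atTop, β < av S f n p :=
            frequently_lt_of_lt_limsup (cobddU (havL p)) hp.2
          obtain ⟨n, hnlt, hn1⟩ := (hfreq.and_eventually (eventually_ge_atTop 1)).exists
          have hn0 : (0:ℝ) < n := by exact_mod_cast hn1
          have h7 := mul_lt_mul_of_pos_right hnlt hn0
          have h8 : (1 / (n:ℝ)) * bs S f n p * n = bs S f n p := by field_simp
          rw [av] at h7
          rw [h8] at h7
          refine ⟨n, hn1, ?_⟩
          rw [hbsg n p, if_pos hp]
          linarith
      have hmax := maximal_ergodic ν hS hgmeas hgb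
      rw [hEeq] at hmax
      have h9 : ∫ p in A, g p ∂ν = ∫ p in A, (f p - β) ∂ν := by
        refine setIntegral_congr_fun hAmeas fun p hp => ?_
        rw [hg, Set.indicator_of_mem hp]
      have h10 : ∫ p in A, (f p - β) ∂ν = (∫ p in A, f p ∂ν) - β * (ν A).toReal := by
        rw [integral_sub ((integrable_of_bounded hf hfb).integrableOn)
          (integrableOn_const (measure_lt_top ν A).ne)]
        rw [setIntegral_const]
        simp [mul_comm, Measure.real_def]
      rw [h9, h10] at hmax
      linarith
    -- second inequality : ∫_A f ≤ α * ν(A)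
    have h2 : ∫ p in A, f p ∂ν ≤ α * (ν A).toReal := by
      set g : Ω → ℝ := A.indicator (fun p => α - f p) with hg
      have hgmeas : Measurable g := (measurable_const.sub hf).indicator hAmeas
      have hgb : ∀ p, |g p| ≤ M + |α| := by
        intro p
        by_cases hp : p ∈ A
        · rw [hg, Set.indicator_of_mem hp]
          calc |α - f p| ≤ |α| + |f p| := abs_sub _ _
            _ ≤ M + |α| := by have := hfb p; linarith
        · rw [hg, Set.indicator_of_notMem hp]
          have : (0:ℝ) ≤ M := le_trans (abs_nonneg _) (hfb p)
          simp only [abs_zero]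
          positivity
      have hbsg : ∀ k p, bs S g k p = if p ∈ A then k * α - bs S f k p else 0 := by
        intro k
        induction k with
        | zero => intro p; simp [bs]
        | succ k ih =>
            intro p
            rw [bs_succ' S g k p, bs_succ' S f k p, ih (S p)]
            by_cases hp : p ∈ A
            · have hp' : S p ∈ A := (hmem p).2 hp
              simp only [hg, Set.indicator_of_mem hp, if_pos hp, if_pos hp']
              push_cast; ring
            · have hp' : S p ∉ A := fun h => hp ((hmem p).1 h)
              simp [hg, Set.indicator_of_notMem hp, if_neg hp, if_neg hp']
      have hEeq : {p | ∃ k, 1 ≤ k ∧ 0 < bs S g k p} = A := by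
        ext p
        simp only [Set.mem_setOf_eq]
        constructor
        · rintro ⟨k, _, hkpos⟩
          by_contra hp
          rw [hbsg k p, if_neg hp] at hkpos
          exact lt_irrefl 0 hkpos
        · intro hp
          have hfreq : ∃ᶠ n in atTop, av S f n p < α :=
            frequently_lt_of_liminf_lt (cobddL (havU p)) hp.1
          obtain ⟨n, hnlt, hn1⟩ := (hfreq.and_eventually (eventually_ge_atTop 1)).exists
          have hn0 : (0:ℝ) < n := by exact_mod_cast hn1
          have h7 := mul_lt_mul_of_pos_right hnlt hn0
          have h8 : (1 / (n:ℝ)) * bs S f n p * n = bs S f n p := by field_simp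
          rw [av] at h7
          rw [h8] at h7
          refine ⟨n, hn1, ?_⟩
          rw [hbsg n p, if_pos hp]
          linarith
      have hmax := maximal_ergodic ν hS hgmeas hgb
      rw [hEeq] at hmax
      have h9 : ∫ p in A, g p ∂ν = ∫ p in A, (α - f p) ∂ν := by
        refine setIntegral_congr_fun hAmeas fun p hp => ?_
        rw [hg, Set.indicator_of_mem hp]
      have h10 : ∫ p in A, (α - f p) ∂ν = α * (ν A).toReal - ∫ p in A, f p ∂ν := by
        rw [integral_sub (integrableOn_const (C := α) (measure_lt_top ν A).ne)
          ((integrable_of_bounded hf hfb).integrableOn)]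
        rw [setIntegral_const]
        simp [mul_comm, Measure.real_def]
      rw [h9, h10] at hmax
      linarith
    have h3 : (ν A).toReal = 0 := by
      nlinarith [ENNReal.toReal_nonneg (a := ν A)]
    exact ((ENNReal.toReal_eq_zero_iff _).1 h3).resolve_right (measure_ne_top ν A)
  -- union over rational pairs
  have hbad : ν {p | lip S f p < lsp S f p} = 0 := by
    have hsub : {p | lip S f p < lsp S f p}
        ⊆ ⋃ (q : ℚ) (r : ℚ), {p | lip S f p < q ∧ (q:ℝ) < r ∧ (r:ℝ) < lsp S f p} := by
      intro p hp
      obtain ⟨q, hq1, hq2⟩ := exists_rat_btwn (show lip S f p < lsp S f p from hp)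
      obtain ⟨r, hr1, hr2⟩ := exists_rat_btwn hq2
      simp only [Set.mem_iUnion, Set.mem_setOf_eq]
      exact ⟨q, r, hq1, by exact_mod_cast hr1, hr2⟩
    refine measure_mono_null hsub (measure_iUnion_null fun q => measure_iUnion_null fun r => ?_)
    by_cases hqr : (q:ℝ) < r
    · refine measure_mono_null ?_ (key q r hqr)
      intro p hp
      exact ⟨hp.1, hp.2.2⟩
    · have : {p | lip S f p < q ∧ (q:ℝ) < r ∧ (r:ℝ) < lsp S f p} = ∅ := by
        ext p; simp only [Set.mem_setOf_eq, Set.mem_empty_iff_false, iff_false]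
        rintro ⟨_, h, _⟩; exact hqr h
      rw [this]; exact measure_empty
  have hae := (MeasureTheory.measure_eq_zero_iff_ae_notMem).1 hbad
  filter_upwards [hae] with p hp
  have hle : lip S f p ≤ lsp S f p := liminf_le_limsup (bddU (havU p)) (bddL (havL p))
  have heq : lip S f p = lsp S f p := le_antisymm hle (not_lt.1 hp)
  exact ⟨lsp S f p, tendsto_of_liminf_eq_limsup heq rfl (bddU (havU p)) (bddL (havL p))⟩

end MLME

namespace MLME

lemma ces_nonneg {a : ℕ → ℝ} (h0 : ∀ k, 0 ≤ a k) (n : ℕ) :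
    0 ≤ (1 / (n : ℝ)) * ∑ k ∈ Finset.range n, a k :=
  mul_nonneg (by positivity) (Finset.sum_nonneg fun k _ => h0 k)

lemma ces_le_bound {a : ℕ → ℝ} {M : ℝ} (h0 : ∀ k, 0 ≤ a k) (hM : ∀ k, a k ≤ M) (n : ℕ) :
    (1 / (n : ℝ)) * ∑ k ∈ Finset.range n, a k ≤ M := by
  have hM0 : 0 ≤ M := le_trans (h0 0) (hM 0)
  rcases Nat.eq_zero_or_pos n with rfl | hn
  · simp [hM0]
  · have hn0 : (0:ℝ) < n := by exact_mod_cast hn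
    have hsum : ∑ k ∈ Finset.range n, a k ≤ n * M := by
      calc ∑ k ∈ Finset.range n, a k ≤ ∑ _k ∈ Finset.range n, M :=
            Finset.sum_le_sum fun k _ => hM k
        _ = n * M := by simp [mul_comm]
    calc (1 / (n : ℝ)) * ∑ k ∈ Finset.range n, a k ≤ (1 / (n : ℝ)) * (n * M) :=
          mul_le_mul_of_nonneg_left hsum (by positivity)
      _ = M := by field_simp

lemma H_ge_one {n : ℕ} (hn : 1 ≤ n) : 1 ≤ H n := by
  have h0 : (0:ℕ) ∈ Finset.range n := Finset.mem_range.2 hn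
  have := Finset.single_le_sum (f := fun k : ℕ => (1:ℝ) / (k + 1))
    (fun k _ => by positivity) h0
  simpa [H] using this

lemma lg_nonneg {a : ℕ → ℝ} (h0 : ∀ k, 0 ≤ a k) (n : ℕ) :
    0 ≤ (1 / H n) * ∑ k ∈ Finset.range n, (1 / (k + 1 : ℝ)) * a k :=
  mul_nonneg (one_div_nonneg.2 (H_nonneg n))
    (Finset.sum_nonneg fun k _ => mul_nonneg (by positivity) (h0 k))

lemma lg_le_bound {a : ℕ → ℝ} {M : ℝ} (h0 : ∀ k, 0 ≤ a k) (hM : ∀ k, a k ≤ M) (n : ℕ) :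
    (1 / H n) * ∑ k ∈ Finset.range n, (1 / (k + 1 : ℝ)) * a k ≤ M := by
  have hM0 : 0 ≤ M := le_trans (h0 0) (hM 0)
  rcases Nat.eq_zero_or_pos n with rfl | hn
  · simp [hM0]
  · have hH1 : (1:ℝ) ≤ H n := H_ge_one hn
    have hHpos : 0 < H n := lt_of_lt_of_le one_pos hH1
    have hsum : ∑ k ∈ Finset.range n, (1 / (k + 1 : ℝ)) * a k ≤ M * H n := by
      calc ∑ k ∈ Finset.range n, (1 / (k + 1 : ℝ)) * a k
          ≤ ∑ k ∈ Finset.range n, M * (1 / (k + 1 : ℝ)) := by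
            refine Finset.sum_le_sum fun k _ => ?_
            rw [mul_comm M]
            exact mul_le_mul_of_nonneg_left (hM k) (by positivity)
        _ = M * H n := by rw [H, Finset.mul_sum]
    calc (1 / H n) * ∑ k ∈ Finset.range n, (1 / (k + 1 : ℝ)) * a k
        ≤ (1 / H n) * (M * H n) := mul_le_mul_of_nonneg_left hsum (by positivity)
      _ = M := by field_simp

/-- The key transfer lemma: if `D` satisfies the triangle inequality, both `D` and `E` are
symmetric and `D = E` almost everywhere on the product, then the measure-theoretic
equicontinuity property for `E` implies the one for `D`. -/
theorem transfer {X : Type*} [MetricSpace X] [CompactSpace X]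
    [MeasurableSpace X] [BorelSpace X]
    (μ : ProbabilityMeasure X) (D E : X → X → ℝ)
    (hDtri : ∀ x y z, D x y ≤ D x z + D z y)
    (hDsym : ∀ x y, D x y = D y x)
    (hEsym : ∀ x y, E x y = E y x)
    (hae : ∀ᵐ p ∂((μ : Measure X).prod (μ : Measure X)), D p.1 p.2 = E p.1 p.2)
    (hE : ∀ η : NNReal, 0 < η → η < 1 →
      ∃ K : Set X, MeasurableSet K ∧ η < μ K ∧
        ∀ ε > (0:ℝ), ∃ δ > (0:ℝ), ∀ x ∈ K, ∀ y ∈ K, dist x y < δ → E x y < ε) :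
    ∀ η : NNReal, 0 < η → η < 1 →
      ∃ K : Set X, MeasurableSet K ∧ η < μ K ∧
        ∀ ε > (0:ℝ), ∃ δ > (0:ℝ), ∀ x ∈ K, ∀ y ∈ K, dist x y < δ → D x y < ε := by
  intro η hη0 hη1
  obtain ⟨K, hKm, hηK, hKprop⟩ := hE η hη0 hη1
  have hPae : ∀ᵐ x ∂(μ : Measure X), ∀ᵐ y ∂(μ : Measure X), D x y = E x y :=
    MeasureTheory.Measure.ae_ae_of_ae_prod hae
  set N : Set X := toMeasurable (μ : Measure X)
    {x | ¬ ∀ᵐ y ∂(μ : Measure X), D x y = E x y} with hNdef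
  have hNnull : (μ : Measure X) N = 0 := by
    rw [hNdef, measure_toMeasurable]
    exact ae_iff.1 hPae
  have hNmeas : MeasurableSet N := measurableSet_toMeasurable _ _
  have hNgood : ∀ x, x ∉ N → ∀ᵐ y ∂(μ : Measure X), D x y = E x y := by
    intro x hx
    by_contra hcon
    exact hx (subset_toMeasurable _ _ hcon)
  set Y : Set X := K ∩ Nᶜ with hYdef
  have hYm : MeasurableSet Y := hKm.inter hNmeas.compl
  have hYK : (μ : Measure X) Y = (μ : Measure X) K := by
    refine le_antisymm (measure_mono Set.inter_subset_left) ?_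
    have h1 : K ⊆ Y ∪ N := by
      intro x hx
      by_cases hxN : x ∈ N
      · exact Or.inr hxN
      · exact Or.inl ⟨hx, hxN⟩
    calc (μ : Measure X) K ≤ (μ : Measure X) (Y ∪ N) := measure_mono h1
      _ ≤ (μ : Measure X) Y + (μ : Measure X) N := measure_union_le _ _
      _ = (μ : Measure X) Y := by rw [hNnull, add_zero]
  obtain ⟨Dd, hDdc, hDdd⟩ : ∃ s : Set X, s.Countable ∧ Dense s := by
    obtain ⟨c, hc, hcc⟩ := (isCompact_univ : IsCompact (Set.univ : Set X)).isSeparable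
    refine ⟨c, hc, dense_iff_closure_eq.2 ?_⟩
    exact Set.eq_univ_of_univ_subset hcc
  set Eidx : Set (X × ℚ) := {b | b.1 ∈ Dd ∧ (μ : Measure X) (Y ∩ Metric.ball b.1 (b.2 : ℝ)) = 0}
    with hEidx
  have hEidxc : Eidx.Countable :=
    Set.Countable.mono (fun b hb => Set.mk_mem_prod hb.1 (Set.mem_univ b.2))
      (hDdc.prod Set.countable_univ)
  set bad : Set X := ⋃ b ∈ Eidx, Metric.ball b.1 (b.2 : ℝ) with hbad
  have hbadopen : IsOpen bad := isOpen_biUnion fun b _ => Metric.isOpen_ball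
  have hYbadnull : (μ : Measure X) (Y ∩ bad) = 0 := by
    rw [hbad, Set.inter_iUnion₂]
    refine (measure_biUnion_null_iff hEidxc).2 fun b hb => ?_
    exact hb.2
  set W : Set X := Y \ bad with hW
  have hWm : MeasurableSet W := hYm.diff hbadopen.measurableSet
  have hWY : (μ : Measure X) W = (μ : Measure X) Y := by
    have h2 : Y \ bad = Y \ (Y ∩ bad) := by rw [Set.diff_self_inter]
    rw [hW, h2, measure_diff_null hYbadnull]
  have hWsubK : W ⊆ K := fun x hx => hx.1.1
  have hWgood : ∀ x ∈ W, ∀ᵐ y ∂(μ : Measure X), D x y = E x y :=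
    fun x hx => hNgood x hx.1.2
  have hWd : ∀ x ∈ W, ∀ r : ℝ, 0 < r → (μ : Measure X) (Y ∩ Metric.ball x r) ≠ 0 := by
    intro x hx r hr h0
    obtain ⟨c, hcD, hcd⟩ := hDdd.exists_dist_lt x (show (0:ℝ) < r/4 by linarith)
    obtain ⟨q, hq1, hq2⟩ := exists_rat_btwn (show dist x c < r/2 by linarith)
    have hballs : Metric.ball c (q : ℝ) ⊆ Metric.ball x r := by
      intro z hz
      rw [Metric.mem_ball] at hz ⊢
      have : dist c x < (q:ℝ) := by rw [dist_comm]; exact hq1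
      calc dist z x ≤ dist z c + dist c x := dist_triangle _ _ _
        _ < (q:ℝ) + (q:ℝ) := add_lt_add hz this
        _ < r := by linarith
    have hq0 : (μ : Measure X) (Y ∩ Metric.ball c (q : ℝ)) = 0 :=
      measure_mono_null (Set.inter_subset_inter_right _ hballs) h0
    have hxbad : x ∈ bad := by
      rw [hbad]
      refine Set.mem_biUnion (show (c, q) ∈ Eidx from ⟨hcD, hq0⟩) ?_
      rw [Metric.mem_ball]
      exact hq1
    exact hx.2 hxbad
  refine ⟨W, hWm, ?_, ?_⟩
  · have hcoe : ((μ W : NNReal) : ENNReal) = ((μ K : NNReal) : ENNReal) := by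
      rw [ProbabilityMeasure.ennreal_coeFn_eq_coeFn_toMeasure,
        ProbabilityMeasure.ennreal_coeFn_eq_coeFn_toMeasure]
      rw [hWY, hYK]
    exact lt_of_lt_of_le hηK (le_of_eq (ENNReal.coe_injective hcoe).symm)
  · intro ε hε
    obtain ⟨δ, hδ0, hδ⟩ := hKprop (ε/2) (by linarith)
    refine ⟨δ/2, by linarith, ?_⟩
    intro x hx y hy hxy
    set Nx : Set X := {z | ¬ D x z = E x z} with hNx
    set Ny : Set X := {z | ¬ D y z = E y z} with hNy
    have hNxnull : (μ : Measure X) Nx = 0 := ae_iff.1 (hWgood x hx)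
    have hNynull : (μ : Measure X) Ny = 0 := ae_iff.1 (hWgood y hy)
    have hZpos : (μ : Measure X) (Y ∩ Metric.ball x (δ/2)) ≠ 0 :=
      hWd x hx (δ/2) (by linarith)
    have hnot : ¬ (Y ∩ Metric.ball x (δ/2) ⊆ Nx ∪ Ny) := by
      intro hsub
      exact hZpos (measure_mono_null hsub
        (measure_union_null hNxnull hNynull))
    obtain ⟨z, hzZ, hzN⟩ := Set.not_subset.1 hnot
    have hzY : z ∈ Y := hzZ.1
    have hzK : z ∈ K := hzY.1
    have hzb : dist x z < δ/2 := by
      have := hzZ.2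
      rw [Metric.mem_ball] at this
      rw [dist_comm]
      exact this
    have hDxz : D x z = E x z := by
      by_contra hcon
      exact hzN (Or.inl hcon)
    have hDyz : D y z = E y z := by
      by_contra hcon
      exact hzN (Or.inr hcon)
    have hExz : E x z < ε/2 := hδ x (hWsubK hx) z hzK (by linarith)
    have hEzy : E z y < ε/2 := by
      have hdzy : dist z y < δ := by
        calc dist z y ≤ dist z x + dist x y := dist_triangle _ _ _
          _ < δ/2 + δ/2 := add_lt_add (by rw [dist_comm]; exact hzb) hxy
          _ = δ := by ring
      exact hδ z hzK y (hWsubK hy) hdzy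
    calc D x y ≤ D x z + D z y := hDtri x y z
      _ = E x z + E z y := by rw [hDxz, hDsym z y, hDyz, hEsym y z]
      _ < ε/2 + ε/2 := add_lt_add hExz hEzy
      _ = ε := by ring

end MLME


/-- For an ergodic `T`-invariant Borel probability measure `μ`, the system `(X,T)` is
`μ`-mean equicontinuous if and only if it is `μ`-logarithmically mean equicontinuous. -/
theorem muMeanEquicontinuous_iff_muLogMeanEquicontinuous
    {X : Type*} [MetricSpace X] [CompactSpace X] [Nonempty X]
    [MeasurableSpace X] [BorelSpace X]
    (T : X → X) (hT : Continuous T)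
    (μ : ProbabilityMeasure X) (hμ : IsErgodicMeasure T μ) :
    MuMeanEquicontinuous T μ ↔ MuLogMeanEquicontinuous T μ := by
  obtain ⟨hInv, -⟩ := hμ
  haveI : TopologicalSpace.SeparableSpace X := by
    rw [← TopologicalSpace.isSeparable_univ_iff]
    exact (isCompact_univ : IsCompact (Set.univ : Set X)).isSeparable
  haveI : SecondCountableTopology X := UniformSpace.secondCountable_of_separable X
  have hTmeas : Measurable T := hT.measurable
  have hTm : MeasurePreserving T (μ : Measure X) (μ : Measure X) := by
    refine ⟨hTmeas, ?_⟩
    refine Measure.ext fun B hB => ?_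
    rw [Measure.map_apply hTmeas hB,
      ← ProbabilityMeasure.ennreal_coeFn_eq_coeFn_toMeasure,
      ← ProbabilityMeasure.ennreal_coeFn_eq_coeFn_toMeasure, hInv B hB]
  set ν : Measure (X × X) := (μ : Measure X).prod (μ : Measure X) with hν
  have hS : MeasurePreserving (Prod.map T T) ν ν := hTm.prod hTm
  set f₀ : X × X → ℝ := fun p => dist p.1 p.2 with hf₀def
  have hf₀c : Continuous f₀ := continuous_fst.dist continuous_snd
  have hf₀m : Measurable f₀ := hf₀c.measurable
  obtain ⟨M, hM⟩ : ∃ M : ℝ, ∀ x y : X, dist x y ≤ M := by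
    obtain ⟨C, hC⟩ := Metric.isBounded_iff.1
      (isCompact_univ : IsCompact (Set.univ : Set X)).isBounded
    exact ⟨C, fun x y => hC (Set.mem_univ x) (Set.mem_univ y)⟩
  have hfb : ∀ p : X × X, |f₀ p| ≤ M := fun p => by
    rw [hf₀def, abs_of_nonneg dist_nonneg]; exact hM _ _
  have hBirk := MLME.birkhoff_ae_tendsto ν hS hf₀m hfb
  set Fc : X → X → ℝ := fun x y => limsup (fun n : ℕ =>
    (1 / (n : ℝ)) * ∑ k ∈ Finset.range n, dist (T^[k] x) (T^[k] y)) atTop with hFc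
  set Gc : X → X → ℝ := fun x y => limsup (fun n : ℕ =>
    (1 / H n) * ∑ k ∈ Finset.range n, (1 / (k + 1 : ℝ)) * dist (T^[k] x) (T^[k] y)) atTop
    with hGc
  have hav : ∀ (x y : X) (n : ℕ), MLME.av (Prod.map T T) f₀ n (x, y)
      = (1 / (n : ℝ)) * ∑ k ∈ Finset.range n, dist (T^[k] x) (T^[k] y) := by
    intro x y n
    unfold MLME.av MLME.bs
    congr 1
    refine Finset.sum_congr rfl fun k _ => ?_
    rw [Prod.map_iterate]
    rfl
  have haeFG : ∀ᵐ p ∂ν, Fc p.1 p.2 = Gc p.1 p.2 := by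
    filter_upwards [hBirk] with p hp
    obtain ⟨x, y⟩ := p
    obtain ⟨c, hc⟩ := hp
    have hc' : Tendsto (fun n : ℕ =>
        (1 / (n : ℝ)) * ∑ k ∈ Finset.range n, dist (T^[k] x) (T^[k] y)) atTop (𝓝 c) := by
      have heq : (fun n : ℕ => MLME.av (Prod.map T T) f₀ n (x, y))
          = fun n : ℕ => (1 / (n : ℝ)) * ∑ k ∈ Finset.range n, dist (T^[k] x) (T^[k] y) := by
        funext n; exact hav x y n
      rwa [heq] at hc
    have hHt : Tendsto (fun n : ℕ =>
        (1 / H n) * ∑ k ∈ Finset.range n, (1 / (k + 1 : ℝ)) * dist (T^[k] x) (T^[k] y))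
        atTop (𝓝 c) :=
      MLME.hardy (a := fun k => dist (T^[k] x) (T^[k] y)) hc'
    show Fc x y = Gc x y
    rw [hFc, hGc]
    simp only
    rw [hc'.limsup_eq, hHt.limsup_eq]
  have hFsym : ∀ x y, Fc x y = Fc y x := by
    intro x y
    rw [hFc]
    simp only
    congr 1
    funext n
    congr 1
    exact Finset.sum_congr rfl fun k _ => dist_comm _ _
  have hGsym : ∀ x y, Gc x y = Gc y x := by
    intro x y
    rw [hGc]
    simp only
    congr 1
    funext n
    congr 1
    refine Finset.sum_congr rfl fun k _ => ?_
    rw [dist_comm]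
  have hFtri : ∀ x y z, Fc x y ≤ Fc x z + Fc z y := by
    intro x y z
    refine MLME.limsup_triangle (Mv := M) (Mw := M)
      (fun n => MLME.ces_nonneg (fun k => dist_nonneg) n)
      (fun n => MLME.ces_le_bound (fun k => dist_nonneg) (fun k => hM _ _) n)
      (fun n => MLME.ces_le_bound (fun k => dist_nonneg) (fun k => hM _ _) n)
      (fun n => ?_)
    have hsum : ∑ k ∈ Finset.range n, dist (T^[k] x) (T^[k] y)
        ≤ ∑ k ∈ Finset.range n, dist (T^[k] x) (T^[k] z)
          + ∑ k ∈ Finset.range n, dist (T^[k] z) (T^[k] y) := by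
      rw [← Finset.sum_add_distrib]
      exact Finset.sum_le_sum fun k _ => dist_triangle _ _ _
    calc (1 / (n : ℝ)) * ∑ k ∈ Finset.range n, dist (T^[k] x) (T^[k] y)
        ≤ (1 / (n : ℝ)) * (∑ k ∈ Finset.range n, dist (T^[k] x) (T^[k] z)
          + ∑ k ∈ Finset.range n, dist (T^[k] z) (T^[k] y)) :=
          mul_le_mul_of_nonneg_left hsum (by positivity)
      _ = _ := by ring
  have hGtri : ∀ x y z, Gc x y ≤ Gc x z + Gc z y := by
    intro x y z
    refine MLME.limsup_triangle (Mv := M) (Mw := M)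
      (fun n => MLME.lg_nonneg (fun k => dist_nonneg) n)
      (fun n => MLME.lg_le_bound (fun k => dist_nonneg) (fun k => hM _ _) n)
      (fun n => MLME.lg_le_bound (fun k => dist_nonneg) (fun k => hM _ _) n)
      (fun n => ?_)
    have hsum : ∑ k ∈ Finset.range n, (1 / (k + 1 : ℝ)) * dist (T^[k] x) (T^[k] y)
        ≤ ∑ k ∈ Finset.range n, (1 / (k + 1 : ℝ)) * dist (T^[k] x) (T^[k] z)
          + ∑ k ∈ Finset.range n, (1 / (k + 1 : ℝ)) * dist (T^[k] z) (T^[k] y) := by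
      rw [← Finset.sum_add_distrib]
      refine Finset.sum_le_sum fun k _ => ?_
      rw [← mul_add]
      exact mul_le_mul_of_nonneg_left (dist_triangle _ _ _) (by positivity)
    calc (1 / H n) * ∑ k ∈ Finset.range n, (1 / (k + 1 : ℝ)) * dist (T^[k] x) (T^[k] y)
        ≤ (1 / H n) * (∑ k ∈ Finset.range n, (1 / (k + 1 : ℝ)) * dist (T^[k] x) (T^[k] z)
          + ∑ k ∈ Finset.range n, (1 / (k + 1 : ℝ)) * dist (T^[k] z) (T^[k] y)) :=
          mul_le_mul_of_nonneg_left hsum (one_div_nonneg.2 (MLME.H_nonneg n))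
      _ = _ := by ring
  constructor
  · intro h
    exact MLME.transfer μ Gc Fc hGtri hGsym hFsym
      (haeFG.mono fun p hp => hp.symm) h
  · intro h
    exact MLME.transfer μ Fc Gc hFtri hFsym hGsym haeFG h
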